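/- Let L > 0 and σ ∈ {1, −1}, and let A be the real 4×4 matrix with rows: (9√3σ/(64L⁷), 15√3σ/(64L⁷), −85/(192L⁷), −163/(192L⁷)); (15√3σ/(64L⁷), 9√3σ/(64L⁷), −163/(192L⁷), −85/(192L⁷)); (31/(192L⁷), 73/(192L⁷), −9√3σ/(64L⁷), −15√3σ/(64L⁷)); (73/(192L⁷), 31/(192L⁷), −15√3σ/(64L⁷), −9√3σ/(64L⁷)). Then the characteristic polynomial of A is λ⁴ + (49/(144 L¹⁴))·λ² + 5/(288 L²⁸), and the eigenvalues of A over ℂ are exactly the four distinct purely imaginary numbers i√10/(6L⁷), −i√10/(6L⁷), i/(4L⁷), −i/(4L⁷). In particular A is diagonalizable over ℂ and nonsingular. -/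

import Mathlib

open Real Matrix Polynomial Complex

theorem detFinFour {R : Type*} [CommRing R] (M : Matrix (Fin 4) (Fin 4) R) :
    M.det = M 0 0*M 1 1*M 2 2*M 3 3 - M 0 0*M 1 1*M 2 3*M 3 2 - M 0 0*M 1 2*M 2 1*M 3 3
      + M 0 0*M 1 2*M 2 3*M 3 1 + M 0 0*M 1 3*M 2 1*M 3 2 - M 0 0*M 1 3*M 2 2*M 3 1
      - M 0 1*M 1 0*M 2 2*M 3 3 + M 0 1*M 1 0*M 2 3*M 3 2 + M 0 1*M 1 2*M 2 0*M 3 3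
      - M 0 1*M 1 2*M 2 3*M 3 0 - M 0 1*M 1 3*M 2 0*M 3 2 + M 0 1*M 1 3*M 2 2*M 3 0
      + M 0 2*M 1 0*M 2 1*M 3 3 - M 0 2*M 1 0*M 2 3*M 3 1 - M 0 2*M 1 1*M 2 0*M 3 3
      + M 0 2*M 1 1*M 2 3*M 3 0 + M 0 2*M 1 3*M 2 0*M 3 1 - M 0 2*M 1 3*M 2 1*M 3 0
      - M 0 3*M 1 0*M 2 1*M 3 2 + M 0 3*M 1 0*M 2 2*M 3 1 + M 0 3*M 1 1*M 2 0*M 3 2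
      - M 0 3*M 1 1*M 2 2*M 3 0 - M 0 3*M 1 2*M 2 0*M 3 1 + M 0 3*M 1 2*M 2 1*M 3 0 := by
  simp [Matrix.det_succ_row_zero, Fin.sum_univ_succ, Fin.succAbove]
  ring

/-- The linearization matrix `A_{3,4}` at the circular polar relative equilibria `E₃, E₄`. -/
noncomputable def A34 (L σ : ℝ) : Matrix (Fin 4) (Fin 4) ℝ :=
  !![9 * Real.sqrt 3 * σ / (64 * L ^ 7), 15 * Real.sqrt 3 * σ / (64 * L ^ 7),
      -85 / (192 * L ^ 7), -163 / (192 * L ^ 7);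
     15 * Real.sqrt 3 * σ / (64 * L ^ 7), 9 * Real.sqrt 3 * σ / (64 * L ^ 7),
      -163 / (192 * L ^ 7), -85 / (192 * L ^ 7);
     31 / (192 * L ^ 7), 73 / (192 * L ^ 7), -(9 * Real.sqrt 3 * σ) / (64 * L ^ 7),
      -(15 * Real.sqrt 3 * σ) / (64 * L ^ 7);
     73 / (192 * L ^ 7), 31 / (192 * L ^ 7), -(15 * Real.sqrt 3 * σ) / (64 * L ^ 7),
      -(9 * Real.sqrt 3 * σ) / (64 * L ^ 7)]

/-- Eigenvector matrix for `A34`. -/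
noncomputable def Pm34 (σ : ℝ) : Matrix (Fin 4) (Fin 4) ℂ :=
  !![31, 31, 13, 13;
     31, 31, -13, -13;
     9*((Real.sqrt 3 : ℝ):ℂ)*(σ:ℂ) - 4*Complex.I*((Real.sqrt 10 : ℝ):ℂ),
       9*((Real.sqrt 3 : ℝ):ℂ)*(σ:ℂ) + 4*Complex.I*((Real.sqrt 10 : ℝ):ℂ),
       3*((Real.sqrt 3 : ℝ):ℂ)*(σ:ℂ) + 8*Complex.I, 3*((Real.sqrt 3 : ℝ):ℂ)*(σ:ℂ) - 8*Complex.I;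
     9*((Real.sqrt 3 : ℝ):ℂ)*(σ:ℂ) - 4*Complex.I*((Real.sqrt 10 : ℝ):ℂ),
       9*((Real.sqrt 3 : ℝ):ℂ)*(σ:ℂ) + 4*Complex.I*((Real.sqrt 10 : ℝ):ℂ),
       -(3*((Real.sqrt 3 : ℝ):ℂ)*(σ:ℂ) + 8*Complex.I), -(3*((Real.sqrt 3 : ℝ):ℂ)*(σ:ℂ) - 8*Complex.I)]

/-- Eigenvalues of `A34`. -/
noncomputable def d34 (L : ℝ) : Fin 4 → ℂ :=
  ![Complex.I * ((Real.sqrt 10 : ℝ):ℂ) / (6 * (L:ℂ)^7),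
    -(Complex.I * ((Real.sqrt 10 : ℝ):ℂ) / (6 * (L:ℂ)^7)),
    Complex.I / (4 * (L:ℂ)^7), -(Complex.I / (4 * (L:ℂ)^7))]

lemma A34_charpoly (L : ℝ) (hL : 0 < L) (σ : ℝ) (hσ : σ = 1 ∨ σ = -1) :
    (A34 L σ).charpoly = X ^ 4 + C (49 / (144 * L ^ 14)) * X ^ 2 + C (5 / (288 * L ^ 28)) := by
  have hs : Real.sqrt 3 ^ 2 = 3 := Real.sq_sqrt (by norm_num)
  have hg : σ ^ 2 = 1 := by rcases hσ with h | h <;> rw [h] <;> norm_num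
  apply Polynomial.funext
  intro r
  rw [Matrix.charpoly, ← Polynomial.coe_evalRingHom, RingHom.map_det, RingHom.mapMatrix_apply,
    detFinFour]
  simp only [Matrix.map_apply, charmatrix_apply, A34, Matrix.diagonal_apply,
    Matrix.cons_val', Matrix.cons_val_zero, Matrix.cons_val_one, Matrix.head_cons,
    Matrix.empty_val', Matrix.cons_val_fin_one, Matrix.head_fin_const,
    Matrix.cons_val_two, Matrix.cons_val_three, Matrix.tail_cons,
    coe_evalRingHom, eval_sub, eval_X, eval_C, eval_add, eval_mul, eval_pow, eval_neg,
    Fin.isValue, Fin.reduceEq, reduceIte, Matrix.of_apply]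
  norm_num
  linear_combination ((-611/32768)*σ^2/L^28 + (243/65536)*σ^4/L^28
      + (81/65536)*(Real.sqrt 3)^2*σ^4/L^28 + (-153/1024)*r^2*σ^2/L^14) * hs
    + ((-2937/65536)/L^28 + (729/65536)*σ^2/L^28 + (-459/1024)*r^2/L^14) * hg

set_option maxHeartbeats 1000000 in
lemma A34_mul_Pm34 (L : ℝ) (hL : 0 < L) (σ : ℝ) (hσ : σ = 1 ∨ σ = -1) :
    (A34 L σ).map Complex.ofReal * Pm34 σ = Pm34 σ * Matrix.diagonal (d34 L) := by
  have hs : Real.sqrt 3 ^ 2 = 3 := Real.sq_sqrt (by norm_num)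
  have hg : σ ^ 2 = 1 := by rcases hσ with h | h <;> rw [h] <;> norm_num
  have hsC : ((Real.sqrt 3 : ℝ):ℂ) ^ 2 = 3 := by rw [← Complex.ofReal_pow, hs]; norm_num
  have hgC : ((σ : ℝ):ℂ) ^ 2 = 1 := by rw [← Complex.ofReal_pow, hg]; norm_num
  have htC : ((Real.sqrt 10 : ℝ):ℂ) ^ 2 = 10 := by
    rw [← Complex.ofReal_pow, Real.sq_sqrt (by norm_num : (0:ℝ) ≤ 10)]; norm_num
  have hiC : Complex.I ^ 2 = -1 := Complex.I_sq
  ext i j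
  fin_cases i <;> fin_cases j <;>
    · simp [Matrix.mul_apply, Fin.sum_univ_four, Matrix.vecHead, Matrix.vecTail,
        Matrix.diagonal_apply, A34, Pm34, d34]
      push_cast
      first
      | ring1
      | linear_combination ((-27/8)*((σ:ℝ):ℂ)^2/(L:ℂ)^7) * hsC
          + ((2/3)*Complex.I^2/(L:ℂ)^7) * htC + ((-81/8)/(L:ℂ)^7) * hgC
          + ((20/3)/(L:ℂ)^7) * hiC
      | linear_combination ((9/32)*((σ:ℝ):ℂ)^2/(L:ℂ)^7) * hsC + ((27/32)/(L:ℂ)^7) * hgC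
          + ((-2)/(L:ℂ)^7) * hiC
      | linear_combination ((-9/32)*((σ:ℝ):ℂ)^2/(L:ℂ)^7) * hsC + ((-27/32)/(L:ℂ)^7) * hgC
          + ((2)/(L:ℂ)^7) * hiC

lemma Pm34_det (σ : ℝ) : (Pm34 σ).det = -206336 * ((Real.sqrt 10 : ℝ):ℂ) := by
  have hiC : Complex.I ^ 2 = -1 := Complex.I_sq
  rw [detFinFour]
  simp [Pm34, Matrix.vecHead, Matrix.vecTail]
  linear_combination (206336 * ((Real.sqrt 10 : ℝ):ℂ)) * hiC

/-- The linearization at the polar equilibria `E₃, E₄` has characteristic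
polynomial `λ⁴ + 49λ²/(144L¹⁴) + 5/(288L²⁸)` and four distinct purely imaginary eigenvalues
`±i√10/(6L⁷)`, `±i/(4L⁷)`; in particular it is diagonalizable over `ℂ` and nonsingular. -/
theorem linearization_polar34_spectrum (L : ℝ) (hL : 0 < L) (σ : ℝ)
    (hσ : σ = 1 ∨ σ = -1) :
    (A34 L σ).charpoly = X ^ 4 + C (49 / (144 * L ^ 14)) * X ^ 2 + C (5 / (288 * L ^ 28)) ∧
    spectrum ℂ ((A34 L σ).map Complex.ofReal)
      = {Complex.I * (Real.sqrt 10 : ℝ) / (6 * (L : ℂ) ^ 7),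
         -(Complex.I * (Real.sqrt 10 : ℝ) / (6 * (L : ℂ) ^ 7)),
         Complex.I / (4 * (L : ℂ) ^ 7), -(Complex.I / (4 * (L : ℂ) ^ 7))} ∧
    ([Complex.I * (Real.sqrt 10 : ℝ) / (6 * (L : ℂ) ^ 7),
      -(Complex.I * (Real.sqrt 10 : ℝ) / (6 * (L : ℂ) ^ 7)),
      Complex.I / (4 * (L : ℂ) ^ 7), -(Complex.I / (4 * (L : ℂ) ^ 7))] : List ℂ).Pairwise
        (· ≠ ·) ∧
    (∃ (P : Matrix (Fin 4) (Fin 4) ℂ) (d : Fin 4 → ℂ), IsUnit P ∧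
      (A34 L σ).map Complex.ofReal = P * Matrix.diagonal d * P⁻¹) ∧
    (A34 L σ).det ≠ 0 := by
  have hLC : (L : ℂ) ^ 7 ≠ 0 := pow_ne_zero _ (by exact_mod_cast hL.ne')
  have hinv : (L : ℂ) ^ 7 * ((L : ℂ) ^ 7)⁻¹ = 1 := mul_inv_cancel₀ hLC
  have hiC : Complex.I ^ 2 = -1 := Complex.I_sq
  have ht0 : ((Real.sqrt 10 : ℝ):ℂ) ≠ 0 :=
    Complex.ofReal_ne_zero.mpr (ne_of_gt (Real.sqrt_pos.mpr (by norm_num)))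
  have h10 : Real.sqrt 10 ^ 2 = 10 := Real.sq_sqrt (by norm_num)
  -- P is invertible
  have hPdet : (Pm34 σ).det = -206336 * ((Real.sqrt 10 : ℝ):ℂ) := Pm34_det σ
  have hPdet0 : (Pm34 σ).det ≠ 0 := by
    rw [hPdet]; exact mul_ne_zero (by norm_num) ht0
  have hPu : IsUnit (Pm34 σ) :=
    (Matrix.isUnit_iff_isUnit_det _).mpr (isUnit_iff_ne_zero.mpr hPdet0)
  have hdiag : (A34 L σ).map Complex.ofReal = Pm34 σ * Matrix.diagonal (d34 L) * (Pm34 σ)⁻¹ := by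
    rw [← A34_mul_Pm34 L hL σ hσ, Matrix.mul_assoc,
      Matrix.mul_nonsing_inv _ ((Matrix.isUnit_iff_isUnit_det _).mp hPu), Matrix.mul_one]
  -- the six distinctness facts
  have ha0 : Complex.I * ((Real.sqrt 10 : ℝ):ℂ) / (6 * (L:ℂ)^7) ≠ 0 :=
    div_ne_zero (mul_ne_zero Complex.I_ne_zero ht0) (mul_ne_zero (by norm_num) hLC)
  have hc0 : Complex.I / (4 * (L:ℂ)^7) ≠ 0 :=
    div_ne_zero Complex.I_ne_zero (mul_ne_zero (by norm_num) hLC)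
  have hne1 : Complex.I * ((Real.sqrt 10 : ℝ):ℂ) / (6 * (L:ℂ)^7)
      ≠ -(Complex.I * ((Real.sqrt 10 : ℝ):ℂ) / (6 * (L:ℂ)^7)) := by
    intro h; exact ha0 (by linear_combination h / 2)
  have hne6 : Complex.I / (4 * (L:ℂ)^7) ≠ -(Complex.I / (4 * (L:ℂ)^7)) := by
    intro h; exact hc0 (by linear_combination h / 2)
  have hne2 : Complex.I * ((Real.sqrt 10 : ℝ):ℂ) / (6 * (L:ℂ)^7)
      ≠ Complex.I / (4 * (L:ℂ)^7) := by
    intro h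
    have ht32 : ((Real.sqrt 10 : ℝ):ℂ) = 3/2 := by
      linear_combination (-6*Complex.I*(L:ℂ)^7) * h
        + ((-3/2)*Complex.I^2 + ((Real.sqrt 10 : ℝ):ℂ)*Complex.I^2) * hinv
        + ((-3/2) + ((Real.sqrt 10 : ℝ):ℂ)) * hiC
    have hr : Real.sqrt 10 = 3/2 := by
      refine Complex.ofReal_inj.mp ?_; push_cast; exact ht32
    rw [hr] at h10; norm_num at h10
  have hne3 : Complex.I * ((Real.sqrt 10 : ℝ):ℂ) / (6 * (L:ℂ)^7)
      ≠ -(Complex.I / (4 * (L:ℂ)^7)) := by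
    intro h
    have ht32 : ((Real.sqrt 10 : ℝ):ℂ) = -(3/2) := by
      linear_combination (-6*Complex.I*(L:ℂ)^7) * h
        + ((3/2)*Complex.I^2 + ((Real.sqrt 10 : ℝ):ℂ)*Complex.I^2) * hinv
        + ((3/2) + ((Real.sqrt 10 : ℝ):ℂ)) * hiC
    have hr : Real.sqrt 10 = -(3/2) := by
      refine Complex.ofReal_inj.mp ?_; push_cast; exact ht32
    have := Real.sqrt_nonneg 10; rw [hr] at this; norm_num at this
  have hne4 : -(Complex.I * ((Real.sqrt 10 : ℝ):ℂ) / (6 * (L:ℂ)^7))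
      ≠ Complex.I / (4 * (L:ℂ)^7) := by
    intro h
    have ht32 : ((Real.sqrt 10 : ℝ):ℂ) = -(3/2) := by
      linear_combination (6*Complex.I*(L:ℂ)^7) * h
        + ((3/2)*Complex.I^2 + ((Real.sqrt 10 : ℝ):ℂ)*Complex.I^2) * hinv
        + ((3/2) + ((Real.sqrt 10 : ℝ):ℂ)) * hiC
    have hr : Real.sqrt 10 = -(3/2) := by
      refine Complex.ofReal_inj.mp ?_; push_cast; exact ht32
    have := Real.sqrt_nonneg 10; rw [hr] at this; norm_num at this
  have hne5 : -(Complex.I * ((Real.sqrt 10 : ℝ):ℂ) / (6 * (L:ℂ)^7))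
      ≠ -(Complex.I / (4 * (L:ℂ)^7)) := by
    intro h
    have ht32 : ((Real.sqrt 10 : ℝ):ℂ) = 3/2 := by
      linear_combination (6*Complex.I*(L:ℂ)^7) * h
        + ((-3/2)*Complex.I^2 + ((Real.sqrt 10 : ℝ):ℂ)*Complex.I^2) * hinv
        + ((-3/2) + ((Real.sqrt 10 : ℝ):ℂ)) * hiC
    have hr : Real.sqrt 10 = 3/2 := by
      refine Complex.ofReal_inj.mp ?_; push_cast; exact ht32
    rw [hr] at h10; norm_num at h10
  refine ⟨A34_charpoly L hL σ hσ, ?_, ?_, ⟨Pm34 σ, d34 L, hPu, hdiag⟩, ?_⟩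
  · -- spectrum
    rw [hdiag]
    obtain ⟨u, hu⟩ := hPu
    rw [← hu, ← Matrix.coe_units_inv, spectrum.units_conjugate, spectrum_diagonal]
    rw [d34]
    ext z
    simp only [Matrix.range_cons, Matrix.range_empty, Set.union_empty, Set.mem_union,
      Set.mem_singleton_iff, Set.mem_insert_iff]
  · -- pairwise distinct
    simp only [List.pairwise_cons, List.mem_cons, List.mem_singleton, List.not_mem_nil,
      forall_eq_or_imp, forall_eq, IsEmpty.forall_iff, implies_true, and_true]
    exact ⟨⟨hne1, hne2, hne3⟩, ⟨hne4, hne5⟩, hne6, trivial, List.Pairwise.nil⟩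
  · -- det ≠ 0
    have : (A34 L σ).det = 5 / (288 * L ^ 28) := by
      rw [Matrix.det_eq_sign_charpoly_coeff, A34_charpoly L hL σ hσ]
      simp [coeff_add, coeff_C, coeff_X_pow, coeff_C_mul]
      norm_num
    rw [this]
    positivity
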